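/- For integers n ≥ 3 and m ≥ 2, the F-index of the vertex S-join of the cycle C_n and the path P_m is F(C_n ∨̇_S P_m) = mn{(m² + n²) + 6(m + n)} − 6n² + 24mn + 8m − 2n − 14. -/

import Mathlib

/-- The subdivision graph `S(G)`: a new vertex is inserted into each edge of `G`
(each edge is replaced by a path of length 2). The inserted vertices form the
right summand `↥G.edgeSet`. -/
def Sgraph {V : Type*} (G : SimpleGraph V) : SimpleGraph (V ⊕ ↥G.edgeSet) where
  Adj x y :=
    match x, y with
    | Sum.inl v, Sum.inr e => v ∈ (e : Sym2 V)
    | Sum.inr e, Sum.inl v => v ∈ (e : Sym2 V)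
    | _, _ => False
  symm := by constructor; rintro (v | e) (w | f) h <;> exact h
  loopless := by constructor; rintro (v | e) h <;> exact h

/-- The graph `R(G)`: obtained from `G` by inserting a new vertex into each edge of `G`
and joining each new vertex to the end vertices of its corresponding edge. -/
def Rgraph {V : Type*} (G : SimpleGraph V) : SimpleGraph (V ⊕ ↥G.edgeSet) where
  Adj x y :=
    match x, y with
    | Sum.inl v, Sum.inl w => G.Adj v w
    | Sum.inl v, Sum.inr e => v ∈ (e : Sym2 V)
    | Sum.inr e, Sum.inl v => v ∈ (e : Sym2 V)
    | Sum.inr _, Sum.inr _ => False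
  symm := by
    constructor
    rintro (v | e) (w | f) h
    · exact G.adj_symm h
    · exact h
    · exact h
    · exact h
  loopless := by
    constructor
    rintro (v | e) h
    · exact G.irrefl h
    · exact h

/-- The graph `Q(G)`: obtained from `G` by inserting a new vertex into each edge of `G`,
then joining by edges those pairs of new vertices lying on adjacent edges of `G`. -/
def Qgraph {V : Type*} (G : SimpleGraph V) : SimpleGraph (V ⊕ ↥G.edgeSet) where
  Adj x y :=
    match x, y with
    | Sum.inl _, Sum.inl _ => False
    | Sum.inl v, Sum.inr e => v ∈ (e : Sym2 V)
    | Sum.inr e, Sum.inl v => v ∈ (e : Sym2 V)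
    | Sum.inr e, Sum.inr f => e ≠ f ∧ ∃ v, v ∈ (e : Sym2 V) ∧ v ∈ (f : Sym2 V)
  symm := by
    constructor
    rintro (v | e) (w | f) h
    · exact h
    · exact h
    · exact h
    · exact ⟨h.1.symm, by obtain ⟨v, h1, h2⟩ := h.2; exact ⟨v, h2, h1⟩⟩
  loopless := by
    constructor
    rintro (v | e) h
    · exact h
    · exact h.1 rfl

/-- The total graph `T(G)`: obtained from `G` by inserting a new vertex into each edge,
joining each new vertex to the end vertices of its corresponding edge, and joining by
edges those pairs of new vertices lying on adjacent edges of `G`. -/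
def Tgraph {V : Type*} (G : SimpleGraph V) : SimpleGraph (V ⊕ ↥G.edgeSet) where
  Adj x y :=
    match x, y with
    | Sum.inl v, Sum.inl w => G.Adj v w
    | Sum.inl v, Sum.inr e => v ∈ (e : Sym2 V)
    | Sum.inr e, Sum.inl v => v ∈ (e : Sym2 V)
    | Sum.inr e, Sum.inr f => e ≠ f ∧ ∃ v, v ∈ (e : Sym2 V) ∧ v ∈ (f : Sym2 V)
  symm := by
    constructor
    rintro (v | e) (w | f) h
    · exact G.adj_symm h
    · exact h
    · exact h
    · exact ⟨h.1.symm, by obtain ⟨v, h1, h2⟩ := h.2; exact ⟨v, h2, h1⟩⟩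
  loopless := by
    constructor
    rintro (v | e) h
    · exact G.irrefl h
    · exact h.1 rfl

/-- The disjoint union of `H` and `K` together with all edges joining a vertex `a` of `H`
with `P a` to every vertex of `K`. -/
def joinOn {A B : Type*} (H : SimpleGraph A) (K : SimpleGraph B) (P : A → Prop) :
    SimpleGraph (A ⊕ B) where
  Adj x y :=
    match x, y with
    | Sum.inl a, Sum.inl a' => H.Adj a a'
    | Sum.inr b, Sum.inr b' => K.Adj b b'
    | Sum.inl a, Sum.inr _ => P a
    | Sum.inr _, Sum.inl a => P a
  symm := by
    constructor
    rintro (a | b) (a' | b') h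
    · exact H.adj_symm h
    · exact h
    · exact h
    · exact K.adj_symm h
  loopless := by
    constructor
    rintro (a | b) h
    · exact H.irrefl h
    · exact K.irrefl h

/-- The vertex S-join `G₁ ∨̇_S G₂`: obtained from `S(G₁)` and `G₂` by joining each vertex
of `V(G₁)` to every vertex of `G₂`. -/
def vertexSJoin {V₁ V₂ : Type*} (G₁ : SimpleGraph V₁) (G₂ : SimpleGraph V₂) :
    SimpleGraph ((V₁ ⊕ ↥G₁.edgeSet) ⊕ V₂) :=
  joinOn (Sgraph G₁) G₂ (fun x => x.isLeft)

/-- The edge S-join `G₁ ∨̱_S G₂`: obtained from `S(G₁)` and `G₂` by joining each inserted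
vertex (each vertex of `I(G₁)`) to every vertex of `G₂`. -/
def edgeSJoin {V₁ V₂ : Type*} (G₁ : SimpleGraph V₁) (G₂ : SimpleGraph V₂) :
    SimpleGraph ((V₁ ⊕ ↥G₁.edgeSet) ⊕ V₂) :=
  joinOn (Sgraph G₁) G₂ (fun x => x.isRight)

/-- The vertex R-join `G₁ ∨̇_R G₂`. -/
def vertexRJoin {V₁ V₂ : Type*} (G₁ : SimpleGraph V₁) (G₂ : SimpleGraph V₂) :
    SimpleGraph ((V₁ ⊕ ↥G₁.edgeSet) ⊕ V₂) :=
  joinOn (Rgraph G₁) G₂ (fun x => x.isLeft)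

/-- The edge R-join `G₁ ∨̱_R G₂`. -/
def edgeRJoin {V₁ V₂ : Type*} (G₁ : SimpleGraph V₁) (G₂ : SimpleGraph V₂) :
    SimpleGraph ((V₁ ⊕ ↥G₁.edgeSet) ⊕ V₂) :=
  joinOn (Rgraph G₁) G₂ (fun x => x.isRight)

/-- The vertex Q-join `G₁ ∨̇_Q G₂`. -/
def vertexQJoin {V₁ V₂ : Type*} (G₁ : SimpleGraph V₁) (G₂ : SimpleGraph V₂) :
    SimpleGraph ((V₁ ⊕ ↥G₁.edgeSet) ⊕ V₂) :=
  joinOn (Qgraph G₁) G₂ (fun x => x.isLeft)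

/-- The edge Q-join `G₁ ∨̱_Q G₂`. -/
def edgeQJoin {V₁ V₂ : Type*} (G₁ : SimpleGraph V₁) (G₂ : SimpleGraph V₂) :
    SimpleGraph ((V₁ ⊕ ↥G₁.edgeSet) ⊕ V₂) :=
  joinOn (Qgraph G₁) G₂ (fun x => x.isRight)

/-- The vertex T-join `G₁ ∨̇_T G₂`. -/
def vertexTJoin {V₁ V₂ : Type*} (G₁ : SimpleGraph V₁) (G₂ : SimpleGraph V₂) :
    SimpleGraph ((V₁ ⊕ ↥G₁.edgeSet) ⊕ V₂) :=
  joinOn (Tgraph G₁) G₂ (fun x => x.isLeft)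

/-- The edge T-join `G₁ ∨̱_T G₂`. -/
def edgeTJoin {V₁ V₂ : Type*} (G₁ : SimpleGraph V₁) (G₂ : SimpleGraph V₂) :
    SimpleGraph ((V₁ ⊕ ↥G₁.edgeSet) ⊕ V₂) :=
  joinOn (Tgraph G₁) G₂ (fun x => x.isRight)

/-- Degree of a vertex in a graph on a finite vertex type. -/
noncomputable def gdeg {V : Type*} [Finite V] (G : SimpleGraph V) (v : V) : ℕ :=
  haveI : Fintype ↥(G.neighborSet v) := Fintype.ofFinite _
  G.degree v

/-- The forgotten topological index (F-index): `F(G) = ∑_{v ∈ V(G)} d_G(v)³`. -/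
noncomputable def Findex {V : Type*} [Finite V] (G : SimpleGraph V) : ℕ :=
  haveI := Fintype.ofFinite V
  ∑ v : V, gdeg G v ^ 3

/-- The first Zagreb index: `M₁(G) = ∑_{v ∈ V(G)} d_G(v)²`. -/
noncomputable def M1 {V : Type*} [Finite V] (G : SimpleGraph V) : ℕ :=
  haveI := Fintype.ofFinite V
  ∑ v : V, gdeg G v ^ 2

/-- `M₄(G) = ∑_{v ∈ V(G)} d_G(v)⁴`. -/
noncomputable def M4 {V : Type*} [Finite V] (G : SimpleGraph V) : ℕ :=
  haveI := Fintype.ofFinite V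
  ∑ v : V, gdeg G v ^ 4

/-- The hyper Zagreb index: `HM(G) = ∑_{uv ∈ E(G)} (d_G(u) + d_G(v))²`. -/
noncomputable def HM {V : Type*} [Finite V] (G : SimpleGraph V) : ℕ :=
  haveI : Fintype ↥G.edgeSet := Fintype.ofFinite _
  ∑ e : ↥G.edgeSet,
    Sym2.lift ⟨fun u v => (gdeg G u + gdeg G v) ^ 2,
      fun u v => by dsimp only; rw [add_comm]⟩ (e : Sym2 V)

/-- The redefined Zagreb index:
`ReZM(G) = ∑_{uv ∈ E(G)} d_G(u) d_G(v) (d_G(u) + d_G(v))`. -/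
noncomputable def ReZM {V : Type*} [Finite V] (G : SimpleGraph V) : ℕ :=
  haveI : Fintype ↥G.edgeSet := Fintype.ofFinite _
  ∑ e : ↥G.edgeSet,
    Sym2.lift ⟨fun u v => gdeg G u * gdeg G v * (gdeg G u + gdeg G v),
      fun u v => by dsimp only; ring⟩ (e : Sym2 V)

/-- The number of edges of `G`. -/
noncomputable def numEdges {V : Type*} (G : SimpleGraph V) : ℕ :=
  Nat.card ↥G.edgeSet


open Finset SimpleGraph

lemma gdeg_eq_degree' {V : Type*} [Fintype V] (G : SimpleGraph V) (v : V)
    [Fintype ↥(G.neighborSet v)] : gdeg G v = G.degree v := by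
  unfold gdeg
  congr!

lemma gdeg_eq_sum' {V : Type*} [Fintype V] (G : SimpleGraph V) [DecidableRel G.Adj] (v : V) :
    gdeg G v = ∑ w : V, if G.Adj v w then 1 else 0 := by
  rw [gdeg_eq_degree', ← Finset.card_filter, ← neighborFinset_eq_filter]
  rfl

lemma Findex_eq' {V : Type*} [Fintype V] (G : SimpleGraph V) :
    Findex G = ∑ v : V, gdeg G v ^ 3 := by
  unfold Findex
  congr!

instance pathGraph_decAdj' (m : ℕ) : DecidableRel (pathGraph m).Adj := fun _ _ =>
  decidable_of_iff _ pathGraph_adj.symm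

lemma pathGraph_degree' (m : ℕ) (hm : 2 ≤ m) (i : Fin m) :
    (pathGraph m).degree i = if i.val = 0 ∨ i.val = m - 1 then 1 else 2 := by
  classical
  have h1 : (pathGraph m).degree i = ((Finset.range m).filter
      (fun j => i.val + 1 = j ∨ j + 1 = i.val)).card := by
    rw [SimpleGraph.degree, neighborFinset_eq_filter, Finset.card_filter, Finset.card_filter,
      ← Fin.sum_univ_eq_sum_range (fun j => if i.val + 1 = j ∨ j + 1 = i.val then 1 else 0) m]
    refine Finset.sum_congr rfl fun j _ => ?_
    simp [pathGraph_adj]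
  rw [h1]
  have hi := i.isLt
  by_cases h0 : i.val = 0
  · have : (Finset.range m).filter (fun j => i.val + 1 = j ∨ j + 1 = i.val) = {1} := by
      ext j; simp only [Finset.mem_filter, Finset.mem_range, Finset.mem_singleton]; omega
    rw [this]; simp [h0]
  · by_cases hl : i.val = m - 1
    · have : (Finset.range m).filter (fun j => i.val + 1 = j ∨ j + 1 = i.val) = {m - 2} := by
        ext j; simp only [Finset.mem_filter, Finset.mem_range, Finset.mem_singleton]; omega
      rw [this]; simp [hl]
    · have : (Finset.range m).filter (fun j => i.val + 1 = j ∨ j + 1 = i.val)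
          = {i.val + 1, i.val - 1} := by
        ext j; simp only [Finset.mem_filter, Finset.mem_range, Finset.mem_insert,
          Finset.mem_singleton]; omega
      rw [this, Finset.card_pair (by omega)]
      simp [h0, hl]

lemma cycle_edgeFinset_card' (n : ℕ) (hn : 3 ≤ n) :
    (cycleGraph n).edgeFinset.card = n := by
  obtain ⟨k, rfl⟩ : ∃ k, n = k + 3 := ⟨n - 3, by omega⟩
  have h := SimpleGraph.sum_degrees_eq_twice_card_edges (cycleGraph (k + 3))
  simp only [cycleGraph_degree_three_le, Finset.sum_const, Finset.card_univ,
    Fintype.card_fin, smul_eq_mul] at h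
  omega

theorem Findex_vertexSJoin_ex10 (n m : ℕ) (hn : 3 ≤ n) (hm : 2 ≤ m) :
    (Findex (vertexSJoin (SimpleGraph.cycleGraph n) (SimpleGraph.pathGraph m)) : ℤ) =
      (m : ℤ) * (n : ℤ) * (((m : ℤ) ^ 2 + (n : ℤ) ^ 2) + 6 * ((m : ℤ) + (n : ℤ))) - 6 * (n : ℤ) ^ 2 + 24 * (m : ℤ) * (n : ℤ) + 8 * (m : ℤ) - 2 * (n : ℤ) - 14 := by
  classical
  haveI : DecidableRel (vertexSJoin (cycleGraph n) (pathGraph m)).Adj := Classical.decRel _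
  -- degrees of the three kinds of vertices
  have hd1 : ∀ v : Fin n,
      gdeg (vertexSJoin (cycleGraph n) (pathGraph m)) (Sum.inl (Sum.inl v)) = m + 2 := by
    intro v
    rw [gdeg_eq_sum', Fintype.sum_sum_type, Fintype.sum_sum_type]
    have e1 : ∑ w : Fin n, (if (vertexSJoin (cycleGraph n) (pathGraph m)).Adj
        (Sum.inl (Sum.inl v)) (Sum.inl (Sum.inl w)) then 1 else 0) = 0 := by
      simp [vertexSJoin, joinOn, Sgraph]
    have e2 : ∑ e : ↥(cycleGraph n).edgeSet, (if (vertexSJoin (cycleGraph n) (pathGraph m)).Adj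
        (Sum.inl (Sum.inl v)) (Sum.inl (Sum.inr e)) then 1 else 0) = 2 := by
      have hh : ∀ e : ↥(cycleGraph n).edgeSet,
          (if (vertexSJoin (cycleGraph n) (pathGraph m)).Adj
            (Sum.inl (Sum.inl v)) (Sum.inl (Sum.inr e)) then (1:ℕ) else 0)
          = (if v ∈ (e : Sym2 (Fin n)) then 1 else 0) := by
        intro e; simp [vertexSJoin, joinOn, Sgraph]; congr
      rw [Finset.sum_congr rfl (fun e _ => hh e),
        Finset.sum_set_coe (f := fun s : Sym2 (Fin n) => if v ∈ s then (1:ℕ) else 0)]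
      have : (cycleGraph n).edgeSet.toFinset = (cycleGraph n).edgeFinset := rfl
      rw [this, ← Finset.card_filter, ← SimpleGraph.incidenceFinset_eq_filter,
        SimpleGraph.card_incidenceFinset_eq_degree]
      obtain ⟨k, rfl⟩ : ∃ k, n = k + 3 := ⟨n - 3, by omega⟩
      exact cycleGraph_degree_three_le
    have e3 : ∑ i : Fin m, (if (vertexSJoin (cycleGraph n) (pathGraph m)).Adj
        (Sum.inl (Sum.inl v)) (Sum.inr i) then 1 else 0) = m := by
      simp [vertexSJoin, joinOn, Sgraph]
    rw [e1, e2, e3]; omega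
  have hd2 : ∀ e : ↥(cycleGraph n).edgeSet,
      gdeg (vertexSJoin (cycleGraph n) (pathGraph m)) (Sum.inl (Sum.inr e)) = 2 := by
    intro e
    rw [gdeg_eq_sum', Fintype.sum_sum_type, Fintype.sum_sum_type]
    have e2 : ∑ f : ↥(cycleGraph n).edgeSet, (if (vertexSJoin (cycleGraph n) (pathGraph m)).Adj
        (Sum.inl (Sum.inr e)) (Sum.inl (Sum.inr f)) then 1 else 0) = 0 := by
      simp [vertexSJoin, joinOn, Sgraph]
    have e3 : ∑ i : Fin m, (if (vertexSJoin (cycleGraph n) (pathGraph m)).Adj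
        (Sum.inl (Sum.inr e)) (Sum.inr i) then 1 else 0) = 0 := by
      simp [vertexSJoin, joinOn, Sgraph]
    have e1 : ∑ w : Fin n, (if (vertexSJoin (cycleGraph n) (pathGraph m)).Adj
        (Sum.inl (Sum.inr e)) (Sum.inl (Sum.inl w)) then 1 else 0) = 2 := by
      have hh : ∀ w : Fin n,
          (if (vertexSJoin (cycleGraph n) (pathGraph m)).Adj
            (Sum.inl (Sum.inr e)) (Sum.inl (Sum.inl w)) then (1:ℕ) else 0)
          = (if w ∈ (e : Sym2 (Fin n)) then 1 else 0) := by
        intro w; simp [vertexSJoin, joinOn, Sgraph]; congr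
      rw [Finset.sum_congr rfl (fun w _ => hh w), ← Finset.card_filter]
      obtain ⟨s, hs⟩ := e
      induction s using Sym2.ind with
      | _ a b =>
        have hab : a ≠ b := ((SimpleGraph.mem_edgeSet _).mp hs).ne
        have : Finset.univ.filter (fun w : Fin n => w ∈ ((⟨s(a, b), hs⟩ :
            ↥(cycleGraph n).edgeSet) : Sym2 (Fin n))) = {a, b} := by
          ext w
          simp [Sym2.mem_iff]
        rw [this, Finset.card_pair hab]
    rw [e1, e2, e3]
  have hd3 : ∀ i : Fin m,
      gdeg (vertexSJoin (cycleGraph n) (pathGraph m)) (Sum.inr i)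
        = n + (if i.val = 0 ∨ i.val = m - 1 then 1 else 2) := by
    intro i
    rw [gdeg_eq_sum', Fintype.sum_sum_type, Fintype.sum_sum_type]
    have e1 : ∑ w : Fin n, (if (vertexSJoin (cycleGraph n) (pathGraph m)).Adj
        (Sum.inr i) (Sum.inl (Sum.inl w)) then 1 else 0) = n := by
      simp [vertexSJoin, joinOn, Sgraph]
    have e2 : ∑ f : ↥(cycleGraph n).edgeSet, (if (vertexSJoin (cycleGraph n) (pathGraph m)).Adj
        (Sum.inr i) (Sum.inl (Sum.inr f)) then 1 else 0) = 0 := by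
      simp [vertexSJoin, joinOn, Sgraph]
    have e3 : ∑ j : Fin m, (if (vertexSJoin (cycleGraph n) (pathGraph m)).Adj
        (Sum.inr i) (Sum.inr j) then 1 else 0)
        = (if i.val = 0 ∨ i.val = m - 1 then 1 else 2) := by
      have hh : ∀ j : Fin m,
          (if (vertexSJoin (cycleGraph n) (pathGraph m)).Adj (Sum.inr i) (Sum.inr j)
            then (1:ℕ) else 0)
          = (if (pathGraph m).Adj i j then 1 else 0) := by
        intro j; simp [vertexSJoin, joinOn, Sgraph]; congr
      rw [Finset.sum_congr rfl (fun j _ => hh j), ← Finset.card_filter,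
        ← neighborFinset_eq_filter, ← pathGraph_degree' m hm i]
      rfl
    rw [e1, e2, e3]
    omega
  -- now assemble
  have hF : Findex (vertexSJoin (cycleGraph n) (pathGraph m))
      = n * (m + 2) ^ 3 + n * 8 + (2 * (n + 1) ^ 3 + (m - 2) * (n + 2) ^ 3) := by
    rw [Findex_eq', Fintype.sum_sum_type, Fintype.sum_sum_type]
    have s1 : ∑ v : Fin n,
        gdeg (vertexSJoin (cycleGraph n) (pathGraph m)) (Sum.inl (Sum.inl v)) ^ 3
        = n * (m + 2) ^ 3 := by
      rw [Finset.sum_congr rfl (fun v _ => by rw [hd1 v])]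
      simp [mul_comm]
    have s2 : ∑ e : ↥(cycleGraph n).edgeSet,
        gdeg (vertexSJoin (cycleGraph n) (pathGraph m)) (Sum.inl (Sum.inr e)) ^ 3
        = n * 8 := by
      rw [Finset.sum_congr rfl (fun e _ => by rw [hd2 e])]
      rw [Finset.sum_const, Finset.card_univ, smul_eq_mul, ← SimpleGraph.edgeFinset_card,
        cycle_edgeFinset_card' n hn]
      norm_num
    have s3 : ∑ i : Fin m,
        gdeg (vertexSJoin (cycleGraph n) (pathGraph m)) (Sum.inr i) ^ 3
        = 2 * (n + 1) ^ 3 + (m - 2) * (n + 2) ^ 3 := by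
      rw [Finset.sum_congr rfl (fun i _ => by rw [hd3 i]),
        Fin.sum_univ_eq_sum_range
          (fun j => (n + if j = 0 ∨ j = m - 1 then 1 else 2) ^ 3) m]
      have hsplit : ∀ j : ℕ, (n + if j = 0 ∨ j = m - 1 then 1 else 2) ^ 3
          = if j = 0 ∨ j = m - 1 then (n + 1) ^ 3 else (n + 2) ^ 3 := by
        intro j; split_ifs <;> rfl
      rw [Finset.sum_congr rfl fun j _ => hsplit j, Finset.sum_ite,
        Finset.sum_const, Finset.sum_const]
      have hc1 : ((Finset.range m).filter (fun j => j = 0 ∨ j = m - 1)).card = 2 := by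
        have h : (Finset.range m).filter (fun j => j = 0 ∨ j = m - 1) = {0, m - 1} := by
          ext j
          simp only [Finset.mem_filter, Finset.mem_range, Finset.mem_insert,
            Finset.mem_singleton]
          omega
        rw [h, Finset.card_pair (by omega)]
      have hc2 : ((Finset.range m).filter (fun j => ¬(j = 0 ∨ j = m - 1))).card = m - 2 := by
        have h := Finset.card_filter_add_card_filter_not
          (s := Finset.range m) (p := fun j => j = 0 ∨ j = m - 1)
        rw [hc1, Finset.card_range] at h
        omega
      rw [hc1, hc2, smul_eq_mul, smul_eq_mul]
    rw [s1, s2, s3]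
  rw [hF]
  have h2 : ((m - 2 : ℕ) : ℤ) = (m : ℤ) - 2 := by
    push_cast [Nat.cast_sub hm]; ring
  push_cast [h2]
  ring
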